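/- Conversely, if T is a bounded operator on a complex Hilbert space H satisfying 2|Im ⟪T f, f⟫| ≤ tan α · (‖f‖² - ‖T f‖²) for all f ∈ H and some α ∈ (0, π/2), then ‖T sin α ± i cos α·I‖ ≤ 1. -/
import Mathlib


open scoped ComplexInnerProductSpace

/-- If `2|Im ⟪Tf,f⟫| ≤ tan α (‖f‖² - ‖Tf‖²)` for all `f` and some `α ∈ (0, π/2)`,
then `‖T sin α ± i cos α · I‖ ≤ 1`. -/
theorem stmt_3 {H : Type*} [NormedAddCommGroup H] [InnerProductSpace ℂ H] [CompleteSpace H]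
    (T : H →L[ℂ] H) (α : ℝ) (hα : α ∈ Set.Ioo 0 (Real.pi / 2))
    (h : ∀ f : H, 2 * |(⟪T f, f⟫).im| ≤ Real.tan α * (‖f‖ ^ 2 - ‖T f‖ ^ 2)) :
    ‖((Real.sin α : ℂ)) • T + (Complex.I * (Real.cos α : ℂ)) • (1 : H →L[ℂ] H)‖ ≤ 1 ∧
    ‖((Real.sin α : ℂ)) • T - (Complex.I * (Real.cos α : ℂ)) • (1 : H →L[ℂ] H)‖ ≤ 1 := by
  obtain ⟨hα0, hα1⟩ := hα
  have hc : 0 < Real.cos α := Real.cos_pos_of_mem_Ioo ⟨by linarith [Real.pi_pos], hα1⟩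
  have hs : 0 < Real.sin α := Real.sin_pos_of_pos_of_lt_pi hα0 (by linarith [Real.pi_pos])
  have hsc : Real.cos α * Real.tan α = Real.sin α := by
    rw [Real.tan_eq_sin_div_cos]; field_simp
  have hpyth := Real.sin_sq_add_cos_sq α
  have key : ∀ ε : ℝ, |ε| = 1 → ∀ f : H,
      ‖(Real.sin α : ℂ) • T f + ((ε : ℂ) * Complex.I * Real.cos α) • f‖ ≤ ‖f‖ := by
    intro ε hε f
    set s := Real.sin α with hsdef
    set c := Real.cos α with hcdef
    have h1 : c * (2 * |(⟪T f, f⟫).im|) ≤ s * (‖f‖ ^ 2 - ‖T f‖ ^ 2) := by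
      calc c * (2 * |(⟪T f, f⟫).im|) ≤ c * (Real.tan α * (‖f‖ ^ 2 - ‖T f‖ ^ 2)) :=
            mul_le_mul_of_nonneg_left (h f) hc.le
        _ = s * (‖f‖ ^ 2 - ‖T f‖ ^ 2) := by rw [← hsc]; ring
    have hre : RCLike.re (⟪(s : ℂ) • T f, ((ε : ℂ) * Complex.I * c) • f⟫) =
        -(s * ε * c * (⟪T f, f⟫).im) := by
      rw [inner_smul_left, inner_smul_right]
      simp [Complex.mul_re, Complex.mul_im]
      ring
    have hsq : ‖(s : ℂ) • T f + ((ε : ℂ) * Complex.I * c) • f‖ ^ 2 ≤ ‖f‖ ^ 2 := by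
      rw [norm_add_sq (𝕜 := ℂ), hre, norm_smul, norm_smul]
      have hnorm1 : ‖(s : ℂ)‖ = s := by
        simp [Complex.norm_real, abs_of_pos hs]
      have hnorm2 : ‖((ε : ℂ) * Complex.I * c)‖ = c := by
        simp [Complex.norm_real, abs_of_pos hc, hε]
      rw [hnorm1, hnorm2]
      have habs : -(ε * (⟪T f, f⟫).im) ≤ |(⟪T f, f⟫).im| := by
        calc -(ε * (⟪T f, f⟫).im) ≤ |ε * (⟪T f, f⟫).im| := neg_le_abs _
          _ = |(⟪T f, f⟫).im| := by rw [abs_mul, hε, one_mul]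
      nlinarith [mul_le_mul_of_nonneg_left h1 hs.le,
        mul_le_mul_of_nonneg_left habs (mul_pos hs hc).le]
    calc ‖(s : ℂ) • T f + ((ε : ℂ) * Complex.I * c) • f‖
        = Real.sqrt (‖(s : ℂ) • T f + ((ε : ℂ) * Complex.I * c) • f‖ ^ 2) := by
          rw [Real.sqrt_sq (norm_nonneg _)]
      _ ≤ Real.sqrt (‖f‖ ^ 2) := Real.sqrt_le_sqrt hsq
      _ = ‖f‖ := Real.sqrt_sq (norm_nonneg _)
  constructor
  · apply ContinuousLinearMap.opNorm_le_bound _ zero_le_one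
    intro f
    rw [one_mul]
    have := key 1 (by norm_num) f
    simpa using this
  · apply ContinuousLinearMap.opNorm_le_bound _ zero_le_one
    intro f
    rw [one_mul]
    have := key (-1) (by norm_num) f
    have heq : ((Real.sin α : ℂ)) • T f + (((-1 : ℝ) : ℂ) * Complex.I * Real.cos α) • f =
        (((Real.sin α : ℂ)) • T - (Complex.I * (Real.cos α : ℂ)) • (1 : H →L[ℂ] H)) f := by
      simp [sub_eq_add_neg]
    rwa [heq] at this
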